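/- Define factor polynomials by e_n(t) = (1-t) e_{n-1}^*(t) for n \ge 1. Then for distinct positive integers n, m, the polynomials e_{n-1}^* and e_{m-1}^* are orthogonal with respect to the weight \omega(t) = 1 - t on [0,1]: \int_0^1 e_{n-1}^*(t) e_{m-1}^*(t) (1-t)\, dt = 0. -/

import Mathlib

open Polynomial MeasureTheory

/-- Falling factorial `c(c-1)⋯(c-m+1)` for real `c`. -/
noncomputable def fallFac (c : ℝ) (m : ℕ) : ℝ := ∏ i ∈ Finset.range m, (c - i)

/-- The identity-type polynomial `e_n(t) = ∑_{m=0}^n ((n)_m (-n)_m / (m!)^2) t^m`. -/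
noncomputable def idPoly (n : ℕ) : Polynomial ℝ :=
  ∑ m ∈ Finset.range (n + 1),
    Polynomial.C (fallFac (n : ℝ) m * fallFac (-(n : ℝ)) m / ((Nat.factorial m : ℝ)) ^ 2) *
      Polynomial.X ^ m

section helpers
open Nat

lemma fallFac_succ' (c : ℝ) (m : ℕ) : fallFac c (m+1) = fallFac c m * (c - m) := by
  simp [fallFac, Finset.prod_range_succ]

lemma fallFac_nat (n : ℕ) : ∀ m, fallFac (n : ℝ) m = (n.descFactorial m : ℝ)
  | 0 => by simp [fallFac]
  | (m+1) => by
    rw [fallFac_succ', fallFac_nat n m, Nat.descFactorial_succ]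
    rcases le_or_gt m n with h | h
    · push_cast [h]; ring
    · rw [Nat.descFactorial_eq_zero_iff_lt.2 h, Nat.sub_eq_zero_of_le h.le]
      simp

lemma fallFac_neg_nat (n : ℕ) : ∀ m, fallFac (-(n:ℝ)) m = (-1)^m * (n.ascFactorial m : ℝ)
  | 0 => by simp [fallFac]
  | (m+1) => by
    rw [fallFac_succ', fallFac_neg_nat n m, Nat.ascFactorial_succ]
    push_cast; ring

/-- Integration by parts for polynomials on `[0,1]`. -/
lemma poly_ibp (p q : Polynomial ℝ) :
    ∫ t in (0:ℝ)..1, (derivative p).eval t * q.eval t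
      = p.eval 1 * q.eval 1 - p.eval 0 * q.eval 0
        - ∫ t in (0:ℝ)..1, p.eval t * (derivative q).eval t := by
  have h : ∫ t in (0:ℝ)..1, (derivative (p * q)).eval t
      = (p*q).eval 1 - (p*q).eval 0 := by
    apply intervalIntegral.integral_deriv_eq_sub' (fun x => (p*q).eval x)
    · funext x; exact Polynomial.deriv (p*q)
    · intro x _; exact (p*q).differentiableAt
    · exact (derivative (p*q)).continuous.continuousOn
  rw [derivative_mul] at h
  simp only [eval_add, eval_mul] at h
  rw [intervalIntegral.integral_add (f := fun t => (derivative p).eval t * q.eval t)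
    (g := fun t => p.eval t * (derivative q).eval t)
    (((derivative p).continuous.mul q.continuous).intervalIntegrable 0 1)
    ((p.continuous.mul (derivative q).continuous).intervalIntegrable 0 1)] at h
  linarith

/-- Repeated integration by parts. -/
lemma key_ibp : ∀ (k : ℕ) (p g : Polynomial ℝ),
    (∀ j, j < k → (derivative^[j] p).eval 0 = 0) →
    (∀ j, j < k → (derivative^[j] p).eval 1 * (derivative^[k-1-j] g).eval 1 = 0) →
    derivative^[k] g = 0 →
    ∫ t in (0:ℝ)..1, (derivative^[k] p).eval t * g.eval t = 0
  | 0, p, g, _, _, hg => by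
    simp at hg; simp [hg]
  | (k+1), p, g, h0, h1, hg => by
    rw [Function.iterate_succ_apply']
    rw [poly_ibp (derivative^[k] p) g]
    rw [h0 k (by omega)]
    have hb : (derivative^[k] p).eval 1 * g.eval 1 = 0 := by
      have := h1 k (by omega)
      simpa using this
    rw [hb]
    have hrec := key_ibp k p (derivative g) (fun j hj => h0 j (by omega))
      (fun j hj => by
        have := h1 j (by omega)
        rwa [show k+1-1-j = (k-1-j)+1 from by omega, Function.iterate_succ_apply] at this)
      (by rw [← Function.iterate_succ_apply]; exact hg)
    rw [hrec]
    ring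

lemma vanish0 {n j : ℕ} (hj : j < n) (q : Polynomial ℝ) :
    (derivative^[j] (X ^ n * q)).eval 0 = 0 := by
  obtain ⟨r, hr⟩ := Polynomial.pow_sub_dvd_iterate_derivative_of_pow_dvd
    (q := (X : Polynomial ℝ)) (n := n) j (dvd_mul_right _ _)
  rw [hr, eval_mul, eval_pow, eval_X, zero_pow (by omega), zero_mul]

lemma vanish1 {n j : ℕ} (hj : j < n) (q : Polynomial ℝ) :
    (derivative^[j] (q * (1 - X) ^ n)).eval 1 = 0 := by
  obtain ⟨r, hr⟩ := Polynomial.pow_sub_dvd_iterate_derivative_of_pow_dvd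
    (q := ((1 - X : Polynomial ℝ))) (n := n) j (dvd_mul_left _ _)
  rw [hr, eval_mul, eval_pow, eval_sub, eval_one, eval_X, sub_self, zero_pow (by omega), zero_mul]

lemma hexp (n : ℕ) (hn : 0 < n) : (X:Polynomial ℝ)^n * (1-X)^(n-1)
    = ∑ i ∈ Finset.range n, C ((-1)^i * ((n-1).choose i : ℝ)) * X^(n+i) := by
  have h1 : ((1:Polynomial ℝ) - X) = (-X) + 1 := by ring
  rw [h1, add_pow, show n-1+1 = n from by omega, Finset.mul_sum]
  refine Finset.sum_congr rfl fun i hi => ?_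
  simp only [one_pow, mul_one, map_mul, map_pow, map_neg, map_one, C_eq_natCast]
  rw [pow_add]
  ring

lemma hD (n : ℕ) (hn : 0 < n) : derivative^[n] ((X:Polynomial ℝ)^n * (1-X)^(n-1))
    = ∑ i ∈ Finset.range n,
      C ((-1)^i * ((n-1).choose i : ℝ) * ((n+i).descFactorial n : ℝ)) * X^i := by
  rw [hexp n hn, iterate_derivative_sum]
  refine Finset.sum_congr rfl fun i hi => ?_
  rw [iterate_derivative_C_mul, iterate_derivative_X_pow_eq_C_mul, Nat.add_sub_cancel_left,
    ← mul_assoc, ← C_mul]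

lemma scalar_main (j d n : ℕ) (hn : n = j + 2 + d) :
    ((((n-1).choose (j+1) : ℕ) : ℝ) * (((n+j+1).descFactorial n : ℕ) : ℝ)
      + (((n-1).choose j : ℕ) : ℝ) * (((n+j).descFactorial n : ℕ) : ℝ)) * (((j+1)! : ℕ) : ℝ) * (((j+1)! : ℕ) : ℝ)
    = ((n ! : ℕ) : ℝ) * ((n.descFactorial (j+1) : ℕ) : ℝ) * ((n.ascFactorial (j+1) : ℕ) : ℝ) := by
  have hf1 := Nat.factorial_mul_descFactorial (n := n+j+1) (k := n) (by omega)
  rw [show n+j+1-n = j+1 from by omega] at hf1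
  have hf2 := Nat.factorial_mul_descFactorial (n := n+j) (k := n) (by omega)
  rw [show n+j-n = j from by omega] at hf2
  have hf3 := Nat.choose_mul_factorial_mul_factorial (n := n-1) (k := j+1) (by omega)
  rw [show n-1-(j+1) = d from by omega] at hf3
  have hf4 := Nat.choose_mul_factorial_mul_factorial (n := n-1) (k := j) (by omega)
  rw [show n-1-j = d+1 from by omega] at hf4
  have hf5 := Nat.factorial_mul_descFactorial (n := n) (k := j+1) (by omega)
  rw [show n-(j+1) = d+1 from by omega] at hf5
  have hf6 := Nat.factorial_mul_ascFactorial' n (j+1) (by omega)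
  rw [show n+(j+1)-1 = n+j from by omega] at hf6
  have e1 : ((j+1)! : ℝ) * ((n+j+1).descFactorial n : ℝ) = ((n+j+1)! : ℝ) := by
    exact_mod_cast congrArg (Nat.cast (R := ℝ)) hf1
  have e2 : ((j)! : ℝ) * ((n+j).descFactorial n : ℝ) = ((n+j)! : ℝ) := by
    exact_mod_cast congrArg (Nat.cast (R := ℝ)) hf2
  have e3 : ((n-1).choose (j+1) : ℝ) * ((j+1)! : ℝ) * (d ! : ℝ) = ((n-1)! : ℝ) := by
    exact_mod_cast congrArg (Nat.cast (R := ℝ)) hf3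
  have e4 : ((n-1).choose j : ℝ) * ((j)! : ℝ) * ((d+1)! : ℝ) = ((n-1)! : ℝ) := by
    exact_mod_cast congrArg (Nat.cast (R := ℝ)) hf4
  have e5 : ((d+1)! : ℝ) * (n.descFactorial (j+1) : ℝ) = (n ! : ℝ) := by
    exact_mod_cast congrArg (Nat.cast (R := ℝ)) hf5
  have e6 : ((n-1)! : ℝ) * (n.ascFactorial (j+1) : ℝ) = ((n+j)! : ℝ) := by
    exact_mod_cast congrArg (Nat.cast (R := ℝ)) hf6
  have r1 : ((n+j+1)! : ℝ) = (n+j+1) * ((n+j)! : ℝ) := by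
    rw [show n+j+1 = (n+j)+1 from by omega, Nat.factorial_succ]; push_cast; ring
  have r2 : ((j+1)! : ℝ) = (j+1) * ((j)! : ℝ) := by
    rw [Nat.factorial_succ]; push_cast; ring
  have r3 : ((d+1)! : ℝ) = (d+1) * ((d)! : ℝ) := by
    rw [Nat.factorial_succ]; push_cast; ring
  have r4 : (n ! : ℝ) = n * ((n-1)! : ℝ) := by
    rw [show n = (n-1)+1 from by omega, Nat.factorial_succ]
    rw [show n-1+1-1 = n-1 from by omega]; push_cast; ring
  have hb : ((j)! : ℝ) ≠ 0 := by positivity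
  have hc : (((n-1))! : ℝ) ≠ 0 := by positivity
  have hd : ((d)! : ℝ) ≠ 0 := by positivity
  have u1 : ((n+j+1).descFactorial n : ℝ) = (n+j+1) * ((n+j)! : ℝ) / ((j+1) * (j)!) := by
    rw [eq_div_iff (by positivity)]
    linear_combination e1 + r1 - ((n+j+1).descFactorial n : ℝ) * r2
  have u2 : ((n+j).descFactorial n : ℝ) = ((n+j)! : ℝ) / ((j)!) := by
    rw [eq_div_iff hb]; linear_combination e2
  have u3 : ((n-1).choose (j+1) : ℝ) = ((n-1)! : ℝ) / ((j+1) * (j)! * (d)!) := by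
    rw [eq_div_iff (by positivity)]
    linear_combination e3 - ((n-1).choose (j+1) : ℝ) * (d ! : ℝ) * r2
  have u4 : ((n-1).choose j : ℝ) = ((n-1)! : ℝ) / ((j)! * ((d+1) * (d)!)) := by
    rw [eq_div_iff (by positivity)]
    linear_combination e4 - ((n-1).choose j : ℝ) * ((j)! : ℝ) * r3
  have u5 : (n.descFactorial (j+1) : ℝ) = (n : ℝ) * ((n-1)! : ℝ) / ((d+1) * (d)!) := by
    rw [eq_div_iff (by positivity)]
    linear_combination e5 + r4 - (n.descFactorial (j+1) : ℝ) * r3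
  have u6 : (n.ascFactorial (j+1) : ℝ) = ((n+j)! : ℝ) / ((n-1)! : ℝ) := by
    rw [eq_div_iff hc]; linear_combination e6
  rw [u1, u2, u3, u4, u5, u6, r2, r4]
  have hnn : (n : ℝ) = (j : ℝ) + 2 + d := by exact_mod_cast congrArg (Nat.cast (R := ℝ)) hn
  rw [hnn]
  field_simp
  ring

lemma coeffS (f : ℕ → ℝ) (N k : ℕ) :
    (∑ i ∈ Finset.range N, C (f i) * X^i).coeff k = if k < N then f k else 0 := by
  rw [finset_sum_coeff]
  simp only [coeff_C_mul, coeff_X_pow, mul_ite, mul_one, mul_zero]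
  rw [Finset.sum_ite_eq (Finset.range N) k f]
  simp [Finset.mem_range]

lemma bridge (n k : ℕ) (hn : 0 < n) (h1 : 1 ≤ k) (hk : k ≤ n) :
    (if k < n then ((-1:ℝ))^k * ((n-1).choose k : ℝ) * ((n+k).descFactorial n : ℝ) else 0)
      - ((-1:ℝ))^(k-1) * ((n-1).choose (k-1) : ℝ) * ((n+(k-1)).descFactorial n : ℝ)
    = ((n)! : ℝ) * (fallFac n k * fallFac (-(n:ℝ)) k / ((k)! : ℝ)^2) := by
  obtain ⟨j, rfl⟩ : ∃ j, k = j+1 := ⟨k-1, by omega⟩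
  rw [fallFac_nat, fallFac_neg_nat]
  simp only [Nat.add_sub_cancel]
  have hfk : (((j+1)! : ℕ) : ℝ) ≠ 0 := by positivity
  rcases lt_or_eq_of_le hk with hlt | heq
  · rw [if_pos hlt]
    have hs := scalar_main j (n - j - 2) n (by omega)
    rw [show n + (j+1) = n+j+1 from by omega]
    have hdf : ((n.descFactorial (j+1) : ℕ) : ℝ) = ((n - j : ℕ) : ℝ) * ((n.descFactorial j : ℕ) : ℝ) := by
      exact_mod_cast congrArg (Nat.cast (R := ℝ)) (Nat.descFactorial_succ n j)
    field_simp
    linear_combination ((-1:ℝ))^(j+1) * hs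
  · rw [if_neg (by omega)]
    subst heq
    rw [show (j+1) + j = (j+1)+(j+1)-1 from by omega,
      Nat.add_descFactorial_eq_ascFactorial' (j+1) (j+1), Nat.descFactorial_self]
    field_simp
    simp; ring

/-- Rodrigues-type formula: `(1-X) * D^n (X^n (1-X)^(n-1)) = n! * idPoly n`. -/
lemma lemA (n : ℕ) (hn : 0 < n) :
    (1 - X) * derivative^[n] ((X:Polynomial ℝ)^n * (1-X)^(n-1))
      = C ((n)! : ℝ) * idPoly n := by
  rw [hD n hn, idPoly]
  apply Polynomial.ext
  intro k
  rw [sub_mul, one_mul, coeff_sub, coeff_C_mul, coeffS, coeffS]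
  cases k with
  | zero =>
    rw [Polynomial.mul_coeff_zero, Polynomial.coeff_X_zero, zero_mul, sub_zero,
        if_pos hn, if_pos (Nat.succ_pos n)]
    norm_num [fallFac, Nat.descFactorial_self]
  | succ j =>
    rw [coeff_X_mul, coeffS]
    rcases le_or_gt (j+1) n with hle | hgt
    · rw [if_pos (show j < n by omega), if_pos (show j + 1 < n + 1 by omega)]
      have hb := bridge n (j+1) hn (by omega) hle
      simpa using hb
    · rw [if_neg (by omega), if_neg (by omega), if_neg (by omega)]
      simp

lemma one_sub_X_ne_zero : (1 - X : Polynomial ℝ) ≠ 0 := fun h => by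
  simpa using congrArg (eval 0) h

lemma main_aux (n m : ℕ) (hn : 0 < n) (hm : 0 < m) (hlt : m < n)
    (qn qm : Polynomial ℝ)
    (hqn : idPoly n = (1 - Polynomial.X) * qn)
    (hqm : idPoly m = (1 - Polynomial.X) * qm) :
    ∫ t in (0:ℝ)..1, qn.eval t * qm.eval t * (1 - t) = 0 := by
  set f : Polynomial ℝ := (X:Polynomial ℝ)^n * (1-X)^(n-1) with hf
  have hA : (1 - X) * derivative^[n] f = (1 - X) * (C ((n)! : ℝ) * qn) := by
    rw [lemA n hn, hqn]; ring
  have hqn' : derivative^[n] f = C ((n)! : ℝ) * qn :=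
    mul_left_cancel₀ one_sub_X_ne_zero hA
  have hfac : ((n)! : ℝ) ≠ 0 := by positivity
  have hkey : ∫ t in (0:ℝ)..1, (derivative^[n] f).eval t * (idPoly m).eval t = 0 := by
    apply key_ibp n f (idPoly m)
    · intro j hj; exact vanish0 hj _
    · intro j hj
      rcases Nat.lt_or_ge j (n-1) with hj' | hj'
      · rw [vanish1 hj' ((X:Polynomial ℝ)^n), zero_mul]
      · have h1 : (idPoly m).eval 1 = 0 := by
          rw [hqm]; simp
        rw [show n-1-j = 0 from by omega, Function.iterate_zero_apply, h1, mul_zero]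
    · apply Polynomial.iterate_derivative_eq_zero
      have hdeg : (idPoly m).natDegree ≤ m := by
        apply Polynomial.natDegree_sum_le_of_forall_le
        intro i hi
        calc (C (fallFac (m:ℝ) i * fallFac (-(m:ℝ)) i / ((i)! : ℝ)^2) * X^i).natDegree
            ≤ (X^i : Polynomial ℝ).natDegree := Polynomial.natDegree_C_mul_le _ _
          _ = i := Polynomial.natDegree_X_pow i
          _ ≤ m := by have := Finset.mem_range.1 hi; omega
      omega
  have hcong : ∫ t in (0:ℝ)..1, qn.eval t * qm.eval t * (1 - t)
      = ∫ t in (0:ℝ)..1, ((n)! : ℝ)⁻¹ * ((derivative^[n] f).eval t * (idPoly m).eval t) := by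
    apply intervalIntegral.integral_congr
    intro t _
    show qn.eval t * qm.eval t * (1 - t)
      = ((n)! : ℝ)⁻¹ * ((derivative^[n] f).eval t * (idPoly m).eval t)
    have h1 : (derivative^[n] f).eval t = ((n)! : ℝ) * qn.eval t := by
      rw [hqn']; simp
    have h2 : (idPoly m).eval t = (1 - t) * qm.eval t := by
      rw [hqm]; simp
    rw [h1, h2]
    field_simp
  rw [hcong, intervalIntegral.integral_const_mul, hkey, mul_zero]

end helpers

theorem factorPoly_orthogonal (n m : ℕ) (hn : 0 < n) (hm : 0 < m) (hnm : n ≠ m)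
    (qn qm : Polynomial ℝ)
    (hqn : idPoly n = (1 - Polynomial.X) * qn)
    (hqm : idPoly m = (1 - Polynomial.X) * qm) :
    ∫ t in (0:ℝ)..1, qn.eval t * qm.eval t * (1 - t) = 0 := by
  rcases hnm.lt_or_gt with h | h
  · have h0 := main_aux m n hm hn h qm qn hqm hqn
    have heq : (∫ t in (0:ℝ)..1, qn.eval t * qm.eval t * (1 - t))
        = ∫ t in (0:ℝ)..1, qm.eval t * qn.eval t * (1 - t) := by
      apply intervalIntegral.integral_congr
      intro t _
      show qn.eval t * qm.eval t * (1 - t) = qm.eval t * qn.eval t * (1 - t)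
      ring
    rw [heq]; exact h0
  · exact main_aux n m hn hm h qn qm hqn hqm
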